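/- Let n ≥ 2 and 2 ≤ k ≤ n. Let A be a real symmetric n×n matrix with A ∈ Γ_k^+, let X ∈ ℝ^n, let t > 0, and set E = tA − X⊗X (where X⊗X is the rank-one matrix with entries X_a X_b). If σ_k(E) > 0, then E ∈ Γ_k^+; moreover, for every i with 2 ≤ i ≤ k, σ_{i−1}(E) ≥ σ_i(E) σ_{i−1}(A) / (t σ_i(A)). -/

import Mathlib

set_option maxHeartbeats 1600000

open Polynomial


open Matrix

/-- `σ_k(A)`: the k-th elementary symmetric function of the eigenvalues of `A`,
defined as `(−1)^k` times the coefficient of `X^(n−k)` in the characteristic polynomial. -/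
noncomputable def sigmaMat {n : ℕ} (A : Matrix (Fin n) (Fin n) ℝ) (k : ℕ) : ℝ :=
  (-1 : ℝ) ^ k * A.charpoly.coeff (n - k)

/-- The k-th Newton transform `T_k(A) = Σ_{j=0}^{k} (−1)^j σ_{k−j}(A) A^j`. -/
noncomputable def newtonT {n : ℕ} (A : Matrix (Fin n) (Fin n) ℝ) (k : ℕ) :
    Matrix (Fin n) (Fin n) ℝ :=
  ∑ j ∈ Finset.range (k + 1), ((-1 : ℝ) ^ j * sigmaMat A (k - j)) • A ^ j

/-- `A ∈ Γ_k^+` iff `σ_j(A) > 0` for all `1 ≤ j ≤ k`. -/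
def GammaPlus {n : ℕ} (k : ℕ) (A : Matrix (Fin n) (Fin n) ℝ) : Prop :=
  ∀ j : ℕ, 1 ≤ j → j ≤ k → 0 < sigmaMat A j


namespace EGP

variable {n : ℕ}

lemma esymm_nil_succ (k : ℕ) : (0 : Multiset ℝ).esymm (k+1) = 0 := by
  simp [Multiset.esymm, Multiset.powersetCard_zero_right]

lemma esymm_zero' (s : Multiset ℝ) : s.esymm 0 = 1 := by
  simp [Multiset.esymm, Multiset.powersetCard_zero_left]

lemma esymm_cons (x : ℝ) (s : Multiset ℝ) (k : ℕ) :
    (x ::ₘ s).esymm (k+1) = s.esymm (k+1) + x * s.esymm k := by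
  rw [Multiset.esymm, Multiset.powersetCard_cons, Multiset.map_add, Multiset.sum_add,
    Multiset.map_map]
  congr 1
  rw [Multiset.esymm, ← Multiset.sum_map_mul_left]
  apply congr_arg
  apply Multiset.map_congr rfl
  intro A _
  simp [Multiset.prod_cons]

lemma esymm_eq_zero (s : Multiset ℝ) (k : ℕ) (h : Multiset.card s < k) : s.esymm k = 0 := by
  simp [Multiset.esymm, Multiset.powersetCard_eq_empty _ h]

/-- Top-case Newton inequality. -/
lemma newton_top : ∀ (c : ℕ) (u : Multiset ℝ), Multiset.card u = c + 2 →
    2*((c:ℝ)+2)*(u.esymm c * u.esymm (c+2)) ≤ ((c:ℝ)+1) * u.esymm (c+1)^2 := by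
  intro c
  induction c with
  | zero =>
    intro u hu
    obtain ⟨x, y, rfl⟩ := Multiset.card_eq_two.mp hu
    have h1 : ({x, y} : Multiset ℝ) = x ::ₘ y ::ₘ 0 := rfl
    rw [h1]
    simp only [esymm_cons, esymm_zero', esymm_nil_succ]
    push_cast
    ring_nf
    nlinarith [sq_nonneg (x - y)]
  | succ c ih =>
    intro u hu
    have hne : u ≠ 0 := by
      intro h; rw [h] at hu; simp at hu
    obtain ⟨x, hx⟩ := Multiset.exists_mem_of_ne_zero hne
    obtain ⟨u', rfl⟩ := Multiset.exists_cons_of_mem hx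
    have hcard : Multiset.card u' = c + 2 := by
      simpa using hu
    have IH := ih u' hcard
    set e0 := u'.esymm c with he0
    set e1 := u'.esymm (c+1) with he1
    set e2 := u'.esymm (c+2) with he2
    have h3 : u'.esymm (c+3) = 0 := esymm_eq_zero _ _ (by omega)
    have hc1 : (x ::ₘ u').esymm (c+1) = e1 + x * e0 := esymm_cons _ _ _
    have hc2 : (x ::ₘ u').esymm (c+2) = e2 + x * e1 := esymm_cons _ _ _
    have hc3 : (x ::ₘ u').esymm (c+3) = x * e2 := by
      rw [show c+3 = (c+2)+1 from rfl, esymm_cons, h3, zero_add]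
    rw [show c+1+2 = c+3 from rfl, show c+1+1 = c+2 from rfl, hc1, hc2, hc3]
    push_cast
    nlinarith [sq_nonneg (((c:ℝ)+2)*e2 - x*e1), mul_nonneg (sq_nonneg x)
      (by nlinarith : (0:ℝ) ≤ ((c:ℝ)+1)*e1^2 - 2*((c:ℝ)+2)*(e0*e2)), sq_nonneg x]


/-- iterated derivative of a real-rooted polynomial is real-rooted -/
lemma iterate_roots (p : ℝ[X]) (h : Multiset.card p.roots = p.natDegree) :
    ∀ (s : ℕ), s ≤ p.natDegree →
      Multiset.card (derivative^[s] p).roots = (derivative^[s] p).natDegree ∧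
      (derivative^[s] p).natDegree = p.natDegree - s := by
  intro s
  induction s with
  | zero => intro _; exact ⟨h, by simp⟩
  | succ s ih =>
    intro hs
    obtain ⟨h1, h2⟩ := ih (by omega)
    set q := derivative^[s] p with hq
    have hqdeg : 0 < q.natDegree := by omega
    have hdeg : (derivative q).natDegree = q.natDegree - 1 := by
      have := degree_derivative_eq q hqdeg
      exact natDegree_eq_of_degree_eq_some this
    have hcard_le : Multiset.card (derivative q).roots ≤ (derivative q).natDegree :=
      card_roots' _
    have hcard_ge : Multiset.card q.roots ≤ Multiset.card (derivative q).roots + 1 :=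
      card_roots_le_derivative q
    rw [Function.iterate_succ_apply', ← hq]
    constructor
    · omega
    · omega

/-- Newton's inequality, unnormalized, for arbitrary reals. -/
lemma newton (s : Multiset ℝ) (j : ℕ) :
    s.esymm j * s.esymm (j+2) ≤ s.esymm (j+1)^2 := by
  by_cases hm : Multiset.card s < j + 2
  · rw [esymm_eq_zero s (j+2) hm]
    nlinarith [sq_nonneg (s.esymm (j+1))]
  push_neg at hm
  obtain ⟨r, hr⟩ : ∃ r, Multiset.card s = j + 2 + r := ⟨Multiset.card s - (j+2), by omega⟩
  set m := Multiset.card s with hmdef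
  -- the polynomial with roots -s
  set p : ℝ[X] := (s.map (fun a => X + C a)).prod with hp
  have hmonic : p.Monic := by
    rw [hp]
    exact monic_multiset_prod_of_monic (t := s) (f := fun a => X + C a)
      (ht := fun a _ => monic_X_add_C a)
  have hpdeg : p.natDegree = m := by
    rw [hp, natDegree_multiset_prod_of_monic _ (fun f hf => by
      obtain ⟨a, -, rfl⟩ := Multiset.mem_map.mp hf; exact monic_X_add_C a)]
    simp [Multiset.map_map, Function.comp_def, hmdef]
  have hproots : p.roots = s.map (fun a => -a) := by
    have : p = ((s.map (fun a => -a)).map (fun a => X - C a)).prod := by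
      rw [hp, Multiset.map_map]
      congr 1
      apply Multiset.map_congr rfl
      intro a _
      simp [sub_neg_eq_add]
    rw [this, roots_multiset_prod_X_sub_C]
  have hprc : Multiset.card p.roots = p.natDegree := by
    rw [hproots, hpdeg]; simp [hmdef]
  -- iterated derivative
  set q := derivative^[r] p with hqdef
  obtain ⟨hq1, hq2⟩ := iterate_roots p hprc r (by omega)
  have hqdeg : q.natDegree = j + 2 := by rw [hq2, hpdeg]; omega
  have hqroots : Multiset.card q.roots = j + 2 := by rw [hq1, hqdeg]
  have hsplits : q.Splits := splits_iff_card_roots.mpr (by rw [hqroots, hqdeg])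
  have hqfact : q = C q.leadingCoeff * (q.roots.map (fun a => X - C a)).prod :=
    hsplits.eq_prod_roots
  -- coefficients of q two ways
  have hcoeffq : ∀ i, i ≤ j + 2 →
      q.coeff (j + 2 - i) = ((m - i).descFactorial r : ℝ) * s.esymm i := by
    intro i hi
    rw [hqdef, coeff_iterate_derivative]
    have h1 : j + 2 - i + r = m - i := by omega
    rw [h1]
    have h2 : m - i ≤ m := by omega
    have h3 : p.coeff (m - i) = s.esymm i := by
      rw [hp, Multiset.prod_X_add_C_coeff s h2, ← hmdef]
      congr 1
      omega
    rw [h3, nsmul_eq_mul]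
  set u : Multiset ℝ := q.roots.map Neg.neg with hu
  have hucard : Multiset.card u = j + 2 := by rw [hu]; simpa using hqroots
  have hcoeffq' : ∀ i, i ≤ j + 2 →
      q.coeff (j + 2 - i) = q.leadingCoeff * u.esymm i := by
    intro i hi
    conv_lhs => rw [hqfact]
    rw [coeff_C_mul, Multiset.prod_X_sub_C_coeff q.roots
      (by omega : j + 2 - i ≤ Multiset.card q.roots)]
    have h4 : Multiset.card q.roots - (j + 2 - i) = i := by omega
    rw [h4, hu, Multiset.esymm_neg]
  -- leading coefficient
  have hL : q.leadingCoeff = (m.descFactorial r : ℝ) := by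
    have h0 := hcoeffq 0 (by omega)
    have h0' := hcoeffq' 0 (by omega)
    simp only [Nat.sub_zero] at h0 h0'
    have hu0 : u.esymm 0 = 1 := by simp [Multiset.esymm, Multiset.powersetCard_zero_left]
    have he0 : s.esymm 0 = 1 := by simp [Multiset.esymm, Multiset.powersetCard_zero_left]
    rw [hu0, mul_one] at h0'
    rw [he0, mul_one] at h0
    rw [← h0', h0]
  -- extract the three equations
  have hweq : ∀ i, i ≤ j + 2 →
      (((m - i).descFactorial r : ℕ) : ℝ) * s.esymm i
        = ((m.descFactorial r : ℕ) : ℝ) * u.esymm i := by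
    intro i hi
    have a := hcoeffq i hi
    have b := hcoeffq' i hi
    rw [hL] at b
    linarith [a, b]
  have hmj1 : m - j = r + 2 := by omega
  have hmj2 : m - (j+1) = r + 1 := by omega
  have hmj3 : m - (j+2) = r := by omega
  have E1 := hweq j (by omega)
  have E2 := hweq (j+1) (by omega)
  have E3 := hweq (j+2) (by omega)
  rw [hmj1] at E1
  rw [hmj2] at E2
  rw [hmj3] at E3
  set e1 := s.esymm j
  set e2 := s.esymm (j+1)
  set e3 := s.esymm (j+2)
  set w1 := u.esymm j
  set w2 := u.esymm (j+1)
  set w3 := u.esymm (j+2)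
  set D1 : ℕ := (r+2).descFactorial r with hD1def
  set D2 : ℕ := (r+1).descFactorial r with hD2def
  set D3 : ℕ := r.descFactorial r with hD3def
  set D : ℕ := m.descFactorial r with hDdef
  -- nat identities
  have n1 : D2 = (r+1) * D3 := by
    have a := Nat.descFactorial_succ (r+1) r
    have b := Nat.succ_descFactorial_succ r r
    rw [show r+1-r = 1 by omega, one_mul] at a
    rw [hD2def, hD3def, ← a, b]
  have n2 : 2 * D1 = (r+2) * D2 := by
    have a := Nat.descFactorial_succ (r+2) r
    have b := Nat.succ_descFactorial_succ (r+1) r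
    rw [show r+2-r = 2 by omega] at a
    rw [hD1def, hD2def, ← a, b]
  -- positivity
  have hD1p : 0 < D1 := Nat.pos_of_ne_zero (by
    rw [Ne, hD1def, Nat.descFactorial_eq_zero_iff_lt]; omega)
  have hD2p : 0 < D2 := Nat.pos_of_ne_zero (by
    rw [Ne, hD2def, Nat.descFactorial_eq_zero_iff_lt]; omega)
  have hD3p : 0 < D3 := Nat.pos_of_ne_zero (by
    rw [Ne, hD3def, Nat.descFactorial_eq_zero_iff_lt]; omega)
  have hD1r : (0:ℝ) < (D1:ℝ) := by exact_mod_cast hD1p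
  have hD2r : (0:ℝ) < (D2:ℝ) := by exact_mod_cast hD2p
  have hD3r : (0:ℝ) < (D3:ℝ) := by exact_mod_cast hD3p
  have n1r : (D2:ℝ) = ((r:ℝ)+1) * (D3:ℝ) := by exact_mod_cast congrArg (Nat.cast (R := ℝ)) n1
  have n2r : 2 * (D1:ℝ) = ((r:ℝ)+2) * (D2:ℝ) := by exact_mod_cast congrArg (Nat.cast (R := ℝ)) n2
  -- the w-inequality
  have htop := newton_top j u hucard
  have W : w1 * w3 * (D2:ℝ)^2 ≤ w2^2 * ((D1:ℝ) * (D3:ℝ)) := by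
    rcases le_or_gt (w1 * w3) 0 with hw | hw
    · have l1 : w1 * w3 * (D2:ℝ)^2 ≤ 0 :=
        mul_nonpos_of_nonpos_of_nonneg hw (sq_nonneg _)
      have l2 : (0:ℝ) ≤ w2^2 * ((D1:ℝ) * (D3:ℝ)) :=
        mul_nonneg (sq_nonneg _) (by positivity)
      linarith
    · have h2w : 2 * (w1 * w3) ≤ w2^2 := by nlinarith [htop, hw]
      have hG : (0:ℝ) < (D3:ℝ) * (D2:ℝ) := mul_pos hD3r hD2r
      have st1 : 2*(w1*w3)*(((r:ℝ)+1)*((D3:ℝ)*(D2:ℝ)))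
          ≤ w2^2*(((r:ℝ)+1)*((D3:ℝ)*(D2:ℝ))) :=
        mul_le_mul_of_nonneg_right h2w (by positivity)
      have st2 : w2^2*(((r:ℝ)+1)*((D3:ℝ)*(D2:ℝ)))
          ≤ w2^2*(((r:ℝ)+2)*((D3:ℝ)*(D2:ℝ))) := by
        nlinarith [mul_nonneg (sq_nonneg w2) hG.le]
      have lhs_eq : 2*(w1*w3*(D2:ℝ)^2)
          = 2*(w1*w3)*(((r:ℝ)+1)*((D3:ℝ)*(D2:ℝ))) := by
        linear_combination (2*w1*w3*(D2:ℝ)) * n1r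
      have rhs_eq : 2*(w2^2*((D1:ℝ)*(D3:ℝ)))
          = w2^2*(((r:ℝ)+2)*((D3:ℝ)*(D2:ℝ))) := by
        linear_combination (w2^2*(D3:ℝ)) * n2r
      linarith [st1, st2, lhs_eq, rhs_eq]
  -- final conversion
  have hM : (0:ℝ) < (D1:ℝ) * (D3:ℝ) * (D2:ℝ)^2 := by positivity
  refine le_of_mul_le_mul_right ?_ hM
  have id1 : e1 * e3 * ((D1:ℝ) * (D3:ℝ) * (D2:ℝ)^2) = ((D:ℝ))^2 * (w1 * w3 * (D2:ℝ)^2) := by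
    linear_combination ((D3:ℝ) * e3 * (D2:ℝ)^2) * E1 + ((D:ℝ) * w1 * (D2:ℝ)^2) * E3
  have id2 : ((D:ℝ))^2 * (w2^2 * ((D1:ℝ) * (D3:ℝ))) = e2^2 * ((D1:ℝ) * (D3:ℝ) * (D2:ℝ)^2) := by
    linear_combination (-(((D2:ℝ) * e2 + (D:ℝ) * w2) * (D1:ℝ) * (D3:ℝ))) * E2
  calc e1 * e3 * ((D1:ℝ) * (D3:ℝ) * (D2:ℝ)^2)
      = ((D:ℝ))^2 * (w1 * w3 * (D2:ℝ)^2) := id1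
    _ ≤ ((D:ℝ))^2 * (w2^2 * ((D1:ℝ) * (D3:ℝ))) := by
        apply mul_le_mul_of_nonneg_left W (sq_nonneg _)
    _ = e2^2 * ((D1:ℝ) * (D3:ℝ) * (D2:ℝ)^2) := id2


lemma eval_charpoly (M : Matrix (Fin n) (Fin n) ℝ) (x : ℝ) :
    M.charpoly.eval x = det (x • (1 : Matrix (Fin n) (Fin n) ℝ) - M) := by
  rw [Matrix.charpoly, ← coe_evalRingHom, RingHom.map_det]
  congr 1
  ext i j
  by_cases h : i = j <;>
    simp [h, charmatrix_apply, Matrix.diagonal_apply, Matrix.one_apply]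

lemma charpoly_conj (U V M : Matrix (Fin n) (Fin n) ℝ) (hUV : U * V = 1) (hVU : V * U = 1) :
    (U * M * V).charpoly = M.charpoly := by
  apply eq_of_infinite_eval_eq
  have : {x : ℝ | (U * M * V).charpoly.eval x = M.charpoly.eval x} = Set.univ := by
    apply Set.eq_univ_of_forall
    intro x
    simp only [Set.mem_setOf_eq, eval_charpoly]
    have key : x • (1 : Matrix (Fin n) (Fin n) ℝ) - U * M * V
        = U * (x • (1 : Matrix (Fin n) (Fin n) ℝ) - M) * V := by
      rw [Matrix.mul_sub, Matrix.sub_mul]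
      congr 1
      rw [Matrix.mul_smul, Matrix.mul_one, Matrix.smul_mul, hUV]
    rw [key, det_mul, det_mul]
    have : det U * det V = 1 := by
      rw [← det_mul, hUV, det_one]
    calc det U * det (x • (1 : Matrix (Fin n) (Fin n) ℝ) - M) * det V
        = det U * det V * det (x • (1 : Matrix (Fin n) (Fin n) ℝ) - M) := by ring
      _ = det (x • (1 : Matrix (Fin n) (Fin n) ℝ) - M) := by rw [this, one_mul]
  rw [this]
  exact Set.infinite_univ

lemma det_diag_add_rank1 (f Y : Fin n → ℝ) (hf : ∀ a, f a ≠ 0) :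
    det (diagonal f + vecMulVec Y Y)
      = (∏ a, f a) + ∑ a, Y a ^ 2 * ∏ b ∈ Finset.univ.erase a, f b := by
  have hdet : IsUnit (diagonal f).det := by
    rw [det_diagonal]
    exact (Finset.prod_ne_zero_iff.mpr (fun a _ => hf a)).isUnit
  rw [vecMulVec_eq Unit, det_add_replicateCol_mul_replicateRow hdet]
  rw [det_diagonal]
  have hinv : (diagonal f)⁻¹ = diagonal (fun a => (f a)⁻¹) :=
    Matrix.inv_eq_right_inv (by
      rw [diagonal_mul_diagonal,
        show (fun a => f a * (f a)⁻¹) = fun _ => (1:ℝ) from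
          funext fun a => mul_inv_cancel₀ (hf a), diagonal_one])
  rw [hinv]
  have hent : (1 + replicateRow Unit Y * diagonal (fun a => (f a)⁻¹) * replicateCol Unit Y).det
      = 1 + ∑ a, Y a ^ 2 * (f a)⁻¹ := by
    rw [det_unique]
    simp only [Matrix.add_apply, Matrix.one_apply_eq, Matrix.mul_apply, Matrix.replicateRow_apply,
      Matrix.replicateCol_apply, Matrix.diagonal_apply]
    congr 1
    apply Finset.sum_congr rfl
    intro a _
    rw [show (∑ x1, Y x1 * if x1 = a then (f x1)⁻¹ else 0) = Y a * (f a)⁻¹ by simp]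
    ring
  rw [hent, mul_add, mul_one, Finset.mul_sum]
  congr 1
  apply Finset.sum_congr rfl
  intro a _
  rw [← Finset.mul_prod_erase Finset.univ f (Finset.mem_univ a)]
  field_simp [hf a]

lemma charpoly_diag_rank1 (d Y : Fin n → ℝ) :
    (diagonal d - vecMulVec Y Y).charpoly
      = (∏ a, (X - C (d a)))
        + ∑ a, C (Y a ^ 2) * ∏ b ∈ Finset.univ.erase a, (X - C (d b)) := by
  apply eq_of_infinite_eval_eq
  apply Set.Infinite.mono (s := (Set.range d)ᶜ)
  swap
  · exact (Set.finite_range d).infinite_compl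
  intro x hx
  simp only [Set.mem_compl_iff, Set.mem_range, not_exists] at hx
  have hf : ∀ a, x - d a ≠ 0 := fun a => sub_ne_zero.mpr (fun h => hx a h.symm)
  simp only [Set.mem_setOf_eq]
  rw [eval_charpoly]
  have key : x • (1 : Matrix (Fin n) (Fin n) ℝ) - (diagonal d - vecMulVec Y Y)
      = diagonal (fun a => x - d a) + vecMulVec Y Y := by
    ext i j
    by_cases h : i = j
    · simp [h, Matrix.diagonal_apply, Matrix.one_apply, vecMulVec_apply]
      ring
    · simp [h, Matrix.diagonal_apply, Matrix.one_apply, vecMulVec_apply]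
  rw [key, det_diag_add_rank1 _ _ hf]
  simp [eval_prod, eval_finset_sum]


lemma sigma_diag_rank1 (d Y : Fin n → ℝ) (i : ℕ) (h1 : 1 ≤ i) (h2 : i ≤ n) :
    sigmaMat (diagonal d - vecMulVec Y Y) i
      = (Finset.univ.val.map d).esymm i
        - ∑ a, Y a ^ 2 * (((Finset.univ.erase a).val).map d).esymm (i-1) := by
  unfold sigmaMat
  rw [charpoly_diag_rank1, coeff_add, finset_sum_coeff]
  have hcard : Multiset.card (Finset.univ.val.map d) = n := by simp
  have hcoeff1 : (∏ a, (X - C (d a))).coeff (n - i)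
      = (-1:ℝ)^i * (Finset.univ.val.map d).esymm i := by
    rw [Finset.prod_eq_multiset_prod]
    have hmm : Multiset.map (fun a => X - C (d a)) Finset.univ.val
        = Multiset.map (fun r => X - C r) (Multiset.map d Finset.univ.val) := by
      rw [Multiset.map_map]; rfl
    rw [hmm, Multiset.prod_X_sub_C_coeff _ (by rw [hcard]; omega)]
    rw [hcard, show n - (n - i) = i by omega]
  have hcoeff2 : ∀ a : Fin n,
      (C (Y a ^ 2) * ∏ b ∈ Finset.univ.erase a, (X - C (d b))).coeff (n - i)
      = Y a ^ 2 * ((-1:ℝ)^(i-1) * (((Finset.univ.erase a).val).map d).esymm (i-1)) := by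
    intro a
    have hcard' : Multiset.card (((Finset.univ.erase a).val).map d) = n - 1 := by
      simp [Finset.card_erase_of_mem]
    rw [coeff_C_mul, Finset.prod_eq_multiset_prod]
    have hmm : Multiset.map (fun b => X - C (d b)) (Finset.univ.erase a).val
        = Multiset.map (fun r => X - C r) (Multiset.map d (Finset.univ.erase a).val) := by
      rw [Multiset.map_map]; rfl
    rw [hmm, Multiset.prod_X_sub_C_coeff _ (by rw [hcard']; omega)]
    rw [hcard', show n - 1 - (n - i) = i - 1 by omega]
  rw [hcoeff1]
  have hsum : (∑ a, (C (Y a ^ 2) * ∏ b ∈ Finset.univ.erase a, (X - C (d b))).coeff (n - i))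
      = ∑ a, Y a ^ 2 * ((-1:ℝ)^(i-1) * (((Finset.univ.erase a).val).map d).esymm (i-1)) :=
    Finset.sum_congr rfl fun a _ => hcoeff2 a
  rw [hsum, mul_add, ← mul_assoc]
  have hp1 : (-1:ℝ)^i * (-1:ℝ)^i = 1 := by
    rw [← mul_pow]; norm_num
  have hp2 : (-1:ℝ)^i * (-1:ℝ)^(i-1) = -1 := by
    rw [show i = (i-1)+1 by omega, pow_succ, show (i-1)+1-1 = i-1 by omega]
    rw [mul_comm ((-1:ℝ)^(i-1)) (-1), mul_assoc, ← mul_pow]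
    norm_num
  rw [hp1, one_mul, Finset.mul_sum, sub_eq_add_neg, ← Finset.sum_neg_distrib]
  congr 1
  apply Finset.sum_congr rfl
  intro a _
  linear_combination (Y a ^ 2 * (((Finset.univ.erase a).val).map d).esymm (i-1)) * hp2

lemma vecMulVec_zero' :
    vecMulVec (0 : Fin n → ℝ) (0 : Fin n → ℝ) = (0 : Matrix (Fin n) (Fin n) ℝ) := by
  ext i j; simp [vecMulVec_apply]

lemma sigma_diag (d : Fin n → ℝ) (i : ℕ) (h1 : 1 ≤ i) (h2 : i ≤ n) :
    sigmaMat (diagonal d) i = (Finset.univ.val.map d).esymm i := by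
  have := sigma_diag_rank1 d 0 i h1 h2
  rw [vecMulVec_zero', sub_zero] at this
  simpa using this


lemma conj_vecMulVec (P : Matrix (Fin n) (Fin n) ℝ) (u : Fin n → ℝ) :
    P * vecMulVec u u * Pᵀ = vecMulVec (P *ᵥ u) (P *ᵥ u) := by
  ext i j
  simp only [Matrix.mul_apply, vecMulVec_apply, Matrix.mulVec, dotProduct,
    Matrix.transpose_apply, Finset.sum_mul, Finset.mul_sum]
  apply Finset.sum_congr rfl
  intro a _
  apply Finset.sum_congr rfl
  intro b _
  ring


end EGP

open EGP

theorem E_in_GammaPlus (n k : ℕ) (hn : 2 ≤ n) (hk2 : 2 ≤ k) (hkn : k ≤ n)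
    (A : Matrix (Fin n) (Fin n) ℝ) (hA : A.IsSymm) (hAG : GammaPlus k A)
    (X : Fin n → ℝ) (t : ℝ) (ht : 0 < t)
    (hE : 0 < sigmaMat (t • A - Matrix.vecMulVec X X) k) :
    GammaPlus k (t • A - Matrix.vecMulVec X X) ∧
      ∀ i : ℕ, 2 ≤ i → i ≤ k →
        sigmaMat (t • A - Matrix.vecMulVec X X) i * sigmaMat A (i - 1) /
            (t * sigmaMat A i) ≤
          sigmaMat (t • A - Matrix.vecMulVec X X) (i - 1) := by
  -- spectral decomposition
  have hH : A.IsHermitian := by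
    have hct : Aᴴ = Aᵀ := by
      ext i j; simp [Matrix.conjTranspose_apply]
    rw [Matrix.IsHermitian, hct]
    exact hA
  set U : Matrix (Fin n) (Fin n) ℝ := (hH.eigenvectorUnitary : Matrix (Fin n) (Fin n) ℝ)
    with hUdef
  set d : Fin n → ℝ := hH.eigenvalues with hddef
  have hspec : A = U * diagonal d * star U := by
    have := hH.spectral_theorem
    simpa using this
  have hUV : U * star U = 1 := Matrix.mem_unitaryGroup_iff.mp hH.eigenvectorUnitary.2
  have hVU : star U * U = 1 := Matrix.mem_unitaryGroup_iff'.mp hH.eigenvectorUnitary.2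
  have hstar : star U = Uᵀ := by
    ext i j; simp [Matrix.star_apply]
  set Y : Fin n → ℝ := star U *ᵥ X with hYdef
  have hUY : U *ᵥ Y = X := by
    rw [hYdef, Matrix.mulVec_mulVec, hUV, Matrix.one_mulVec]
  set g : Fin n → ℝ := fun a => t * d a with hgdef
  have hEconj : t • A - Matrix.vecMulVec X X
      = U * (diagonal g - vecMulVec Y Y) * star U := by
    rw [Matrix.mul_sub, Matrix.sub_mul]
    congr 1
    · have h1 : diagonal g = t • diagonal d := by
        rw [hgdef]
        ext i j
        by_cases h : i = j <;> simp [h, Matrix.diagonal_apply]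
      rw [h1, Matrix.mul_smul, Matrix.smul_mul, ← hspec]
    · rw [hstar, conj_vecMulVec, hUY]
  -- sigma of E in terms of diagonal data
  have sigmaE : ∀ j : ℕ, sigmaMat (t • A - Matrix.vecMulVec X X) j
      = sigmaMat (diagonal g - vecMulVec Y Y) j := by
    intro j
    unfold sigmaMat
    rw [hEconj, charpoly_conj _ _ _ hUV hVU]
  have sigmaA : ∀ j : ℕ, sigmaMat A j = sigmaMat (diagonal d) j := by
    intro j
    unfold sigmaMat
    rw [hspec, charpoly_conj _ _ _ hUV hVU]
  -- notation
  set eA : ℕ → ℝ := fun j => (Finset.univ.val.map d).esymm j with heA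
  set eL : ℕ → ℝ := fun j => (Finset.univ.val.map g).esymm j with heL
  set ep : Fin n → ℕ → ℝ := fun a j => (((Finset.univ.erase a).val).map g).esymm j with hep
  set Q : ℕ → ℝ := fun j => ∑ a, Y a ^ 2 * ep a (j-1) with hQ
  have hsE : ∀ j : ℕ, 1 ≤ j → j ≤ n →
      sigmaMat (t • A - Matrix.vecMulVec X X) j = eL j - Q j := by
    intro j h1 h2
    rw [sigmaE j, sigma_diag_rank1 g Y j h1 h2]
  have hsA : ∀ j : ℕ, 1 ≤ j → j ≤ n → sigmaMat A j = eA j := by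
    intro j h1 h2
    rw [sigmaA j, sigma_diag d j h1 h2]
  -- scaling
  have hscale : ∀ j : ℕ, eL j = t^j * eA j := by
    intro j
    have h0 := Multiset.pow_smul_esymm t j (Finset.univ.val.map d)
    rw [Multiset.map_map] at h0
    have h1 : (t • ·) ∘ d = g := by
      funext a; simp [hgdef, smul_eq_mul]
    rw [h1] at h0
    show (Multiset.map g Finset.univ.val).esymm j
      = t ^ j * (Multiset.map d Finset.univ.val).esymm j
    rw [← h0, smul_eq_mul]
  -- eigenvalue decomposition of the full multiset at a
  have hcons : ∀ a : Fin n, Finset.univ.val.map g = g a ::ₘ ((Finset.univ.erase a).val).map g := by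
    intro a
    have h1 : (Finset.univ.erase a).val = Finset.univ.val.erase a := by
      rw [Finset.erase_val]
    rw [h1, ← Multiset.map_cons, Multiset.cons_erase (Finset.mem_univ a : a ∈ Finset.univ)]
  -- the core inequality
  have core : ∀ i : ℕ, 2 ≤ i → eL i * Q (i-1) ≤ eL (i-1) * Q i := by
    intro i hi
    obtain ⟨m, rfl⟩ : ∃ m, i = m + 2 := ⟨i - 2, by omega⟩
    have hQ1 : Q (m+1) = ∑ a, Y a ^ 2 * ep a m := by
      simp only [hQ, Nat.add_sub_cancel]
    have hQ2 : Q (m+2) = ∑ a, Y a ^ 2 * ep a (m+1) := by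
      simp only [hQ]
      norm_num
    rw [show m + 2 - 1 = m + 1 from rfl, hQ1, hQ2, Finset.mul_sum, Finset.mul_sum]
    apply Finset.sum_le_sum
    intro a _
    have hnewt := newton ((((Finset.univ.erase a)).val).map g) m
    have hL2 : eL (m+2) = ep a (m+2) + g a * ep a (m+1) := by
      show (Multiset.map g Finset.univ.val).esymm (m+2)
        = (Multiset.map g (Finset.univ.erase a).val).esymm (m+2)
          + g a * (Multiset.map g (Finset.univ.erase a).val).esymm (m+1)
      rw [hcons a, esymm_cons]
    have hL1 : eL (m+1) = ep a (m+1) + g a * ep a m := by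
      show (Multiset.map g Finset.univ.val).esymm (m+1)
        = (Multiset.map g (Finset.univ.erase a).val).esymm (m+1)
          + g a * (Multiset.map g (Finset.univ.erase a).val).esymm m
      rw [hcons a, esymm_cons]
    rw [hL1, hL2]
    have hy := sq_nonneg (Y a)
    have : ep a m * ep a (m+2) ≤ ep a (m+1)^2 := hnewt
    nlinarith [this, hy]
  -- positivity of σ_j(A) data
  have heApos : ∀ j : ℕ, 1 ≤ j → j ≤ k → 0 < eA j := by
    intro j h1 h2
    rw [← hsA j h1 (le_trans h2 hkn)]
    exact hAG j h1 h2
  -- key comparison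
  have key : ∀ i : ℕ, 2 ≤ i → i ≤ k →
      sigmaMat (t • A - Matrix.vecMulVec X X) i * sigmaMat A (i-1)
        ≤ sigmaMat (t • A - Matrix.vecMulVec X X) (i-1) * (t * sigmaMat A i) := by
    intro i hi hik
    obtain ⟨m, rfl⟩ : ∃ m, i = m + 2 := ⟨i - 2, by omega⟩
    have h1 : m + 2 - 1 = m + 1 := rfl
    rw [h1, hsE (m+2) (by omega) (by omega), hsE (m+1) (by omega) (by omega),
      hsA (m+1) (by omega) (by omega), hsA (m+2) (by omega) (by omega)]
    have hcore := core (m+2) (by omega)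
    rw [show m+2-1 = m+1 from rfl] at hcore
    have hsc1 := hscale (m+1)
    have hsc2 := hscale (m+2)
    have hps : (0:ℝ) < t^(m+1) := pow_pos ht _
    -- goal: (eL(m+2) - Q(m+2)) * eA(m+1) ≤ (eL(m+1) - Q(m+1)) * (t * eA(m+2))
    have hmul : (eL (m+2) - Q (m+2)) * eL (m+1) ≤ (eL (m+1) - Q (m+1)) * eL (m+2) := by
      nlinarith [hcore]
    have hgoal : ((eL (m+2) - Q (m+2)) * eA (m+1)) * t^(m+1)
        ≤ ((eL (m+1) - Q (m+1)) * (t * eA (m+2))) * t^(m+1) := by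
      have e1 : ((eL (m+2) - Q (m+2)) * eA (m+1)) * t^(m+1)
          = (eL (m+2) - Q (m+2)) * eL (m+1) := by
        rw [hsc1]; ring
      have e2 : ((eL (m+1) - Q (m+1)) * (t * eA (m+2))) * t^(m+1)
          = (eL (m+1) - Q (m+1)) * eL (m+2) := by
        rw [hsc2]; ring
      rw [e1, e2]; exact hmul
    exact le_of_mul_le_mul_right hgoal hps
  -- downward induction for GammaPlus
  have step : ∀ i : ℕ, 2 ≤ i → i ≤ k →
      0 < sigmaMat (t • A - Matrix.vecMulVec X X) i →
      0 < sigmaMat (t • A - Matrix.vecMulVec X X) (i-1) := by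
    intro i h2 hik hpos
    have hk := key i h2 hik
    have hA1 : 0 < sigmaMat A (i-1) := hAG (i-1) (by omega) (by omega)
    have hA2 : 0 < t * sigmaMat A i := mul_pos ht (hAG i (by omega) hik)
    nlinarith [hk, hpos, hA1, hA2]
  have desc : ∀ r : ℕ, r ≤ k - 1 → 0 < sigmaMat (t • A - Matrix.vecMulVec X X) (k - r) := by
    intro r
    induction r with
    | zero => intro _; simpa using hE
    | succ r ih =>
      intro hr
      have hprev := ih (by omega)
      have h2 : 2 ≤ k - r := by omega
      have hik : k - r ≤ k := by omega
      have := step (k - r) h2 hik hprev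
      rw [show k - r - 1 = k - (r+1) by omega] at this
      exact this
  constructor
  · intro j h1 h2
    have := desc (k - j) (by omega)
    rw [show k - (k - j) = j by omega] at this
    exact this
  · intro i h2 hik
    rw [div_le_iff₀ (mul_pos ht (hAG i (by omega) hik))]
    exact key i h2 hik
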